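/- Applying an entanglement-breaking channel Λ to the A_I subsystem of any bipartite ordered process W yields a direct-cause process: if W = ρ^{A_I aux} * D^{aux A_O → B_I} with ρ a state and D a channel Choi operator, and Λ: L(A_I)→L(A_I) is entanglement breaking, then (Λ ⊗ id^{A_O B_I})(W) can be written as Σ_i p_i ρ_i^{A_I} ⊗ D_i^{A_O B_I} with ρ_i states and D_i channel Choi operators. -/

import Mathlib

open Matrix ComplexOrder

lemma aux13_psd_diag {n : Type*} [Fintype n] [DecidableEq n]
    {M : Matrix n n ℂ} (hM : M.PosSemidef) (i : n) : 0 ≤ M i i := by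
  have := hM.dotProduct_mulVec_nonneg (Pi.single i 1)
  simpa [mulVec, dotProduct, Pi.single_apply] using this

lemma aux13_psd_trace_nonneg {n : Type*} [Fintype n] [DecidableEq n]
    {M : Matrix n n ℂ} (hM : M.PosSemidef) : 0 ≤ M.trace :=
  Finset.sum_nonneg fun i _ => aux13_psd_diag hM i

lemma aux13_nonneg_re {z : ℂ} (hz : 0 ≤ z) : (z.re : ℂ) = z := by
  obtain ⟨h1, h2⟩ := Complex.nonneg_iff.mp hz
  exact Complex.ext rfl (by simp [h2.symm])

lemma aux13_inv_nonneg {z : ℂ} (hz : 0 ≤ z) : 0 ≤ z⁻¹ := by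
  rw [← aux13_nonneg_re hz, ← Complex.ofReal_inv]
  exact Complex.zero_le_real.mpr (inv_nonneg.mpr (Complex.nonneg_iff.mp hz).1)

lemma aux13_psd_smul {n : Type*} [Fintype n]
    {M : Matrix n n ℂ} (hM : M.PosSemidef) {c : ℂ} (hc : 0 ≤ c) :
    (c • M).PosSemidef := by
  have hcs : star c = c := by
    rw [RCLike.star_def, Complex.conj_eq_iff_im]
    exact (Complex.nonneg_iff.mp hc).2.symm
  rw [posSemidef_iff_dotProduct_mulVec]
  constructor
  · show (c • M)ᴴ = c • M
    rw [conjTranspose_smul, hcs, hM.1]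
  · intro x
    rw [smul_mulVec, dotProduct_smul, smul_eq_mul]
    exact mul_nonneg hc (hM.dotProduct_mulVec_nonneg x)

lemma aux13_psd_trace_zero {n : Type*} [Fintype n] [DecidableEq n]
    {M : Matrix n n ℂ} (hM : M.PosSemidef) (h : M.trace = 0) : M = 0 := by
  obtain ⟨B, rfl⟩ : ∃ B : Matrix n n ℂ, M = Bᴴ * B := by
    open scoped MatrixOrder in
    simpa [star_eq_conjTranspose] using CStarAlgebra.nonneg_iff_eq_star_mul_self.mp hM.nonneg
  have hB : B = 0 := by
    have h' : ∑ i : n, ∑ j : n, star (B j i) * B j i = 0 := by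
      simpa [Matrix.trace, Matrix.diag, Matrix.mul_apply, conjTranspose_apply] using h
    have hnn : ∀ i ∈ Finset.univ, (0:ℂ) ≤ ∑ j : n, star (B j i) * B j i :=
      fun i _ => Finset.sum_nonneg fun j _ => star_mul_self_nonneg _
    ext j i
    have h2 := (Finset.sum_eq_zero_iff_of_nonneg hnn).mp h' i (Finset.mem_univ i)
    have hnn2 : ∀ j ∈ Finset.univ, (0:ℂ) ≤ star (B j i) * B j i :=
      fun j _ => star_mul_self_nonneg _
    have h3 := (Finset.sum_eq_zero_iff_of_nonneg hnn2).mp h2 j (Finset.mem_univ j)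
    have : B j i = 0 := by
      by_contra hne
      exact hne (by simpa using (mul_self_eq_zero (a := ‖B j i‖)).mp (by
        have := congrArg (‖·‖) h3
        simpa [norm_mul, norm_star] using this))
    simpa using this
  simp [hB]

lemma aux13_psd_sum {n ι : Type*} [Fintype n] [Fintype ι]
    (f : ι → Matrix n n ℂ) (hf : ∀ r, (f r).PosSemidef) :
    (∑ r, f r).PosSemidef := by
  classical
  exact Finset.sum_induction f _ (fun a b ha hb => ha.add hb) Matrix.PosSemidef.zero
    (fun r _ => hf r)

lemma aux13_contract_psd {n α : Type*} [Fintype n] [Fintype α] [DecidableEq n] [DecidableEq α]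
    {B : Matrix n n ℂ} {D : Matrix (n × α) (n × α) ℂ}
    (hB : B.PosSemidef) (hD : D.PosSemidef) :
    (Matrix.of fun s t : α => ∑ x : n, ∑ y : n, B y x * D (y, s) (x, t)).PosSemidef := by
  obtain ⟨C, rfl⟩ : ∃ C : Matrix n n ℂ, B = Cᴴ * C := by
    open scoped MatrixOrder in
    simpa [star_eq_conjTranspose] using CStarAlgebra.nonneg_iff_eq_star_mul_self.mp hB.nonneg
  set Y : n → Matrix (n × α) α ℂ :=
    fun r => Matrix.of (fun (p : n × α) (t : α) => if p.2 = t then C r p.1 else 0) with hY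
  have key : (Matrix.of fun s t : α => ∑ x : n, ∑ y : n, (Cᴴ * C) y x * D (y, s) (x, t))
      = ∑ r, (Y r)ᴴ * D * (Y r) := by
    ext s t
    simp only [Matrix.sum_apply, Matrix.mul_apply, conjTranspose_apply, of_apply,
      Fintype.sum_prod_type, hY, apply_ite star, star_zero, ite_mul, mul_ite, zero_mul,
      mul_zero, Finset.sum_ite_eq', Finset.mem_univ, if_true]
    simp only [Finset.sum_mul]
    conv_lhs => enter [2, x]; rw [Finset.sum_comm]
    conv_lhs => rw [Finset.sum_comm]
    refine Finset.sum_congr rfl fun r _ => Finset.sum_congr rfl fun x _ =>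
      Finset.sum_congr rfl fun y _ => by ring
  rw [key]
  exact aux13_psd_sum _ fun r => hD.conjTranspose_mul_mul_same (Y r)
theorem stmt_13 (nI na nO nB : ℕ)
    (Λ : Matrix (Fin nI) (Fin nI) ℂ → Matrix (Fin nI) (Fin nI) ℂ)
    (hLin : IsLinearMap ℂ Λ)
    (hTP : ∀ X, (Λ X).trace = X.trace)
    (hEB : ∀ (n : ℕ) (σ : Matrix (Fin nI × Fin n) (Fin nI × Fin n) ℂ),
      σ.PosSemidef → σ.trace = 1 →
      ∃ (m : ℕ) (A : Fin m → Matrix (Fin nI) (Fin nI) ℂ)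
        (B : Fin m → Matrix (Fin n) (Fin n) ℂ),
        (∀ k, (A k).PosSemidef) ∧ (∀ k, (B k).PosSemidef) ∧
        (Matrix.of fun p q : Fin nI × Fin n =>
            Λ (Matrix.of fun i j => σ (i, p.2) (j, q.2)) p.1 q.1)
          = ∑ k, Matrix.of fun p q : Fin nI × Fin n => A k p.1 q.1 * B k p.2 q.2)
    (ρ : Matrix (Fin nI × Fin na) (Fin nI × Fin na) ℂ)
    (hρ : ρ.PosSemidef) (hρtr : ρ.trace = 1)
    (D : Matrix (Fin na × Fin nO × Fin nB) (Fin na × Fin nO × Fin nB) ℂ)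
    (hD : D.PosSemidef)
    (hDtr : ∀ x a x' a', (∑ b : Fin nB, D (x, a, b) (x', a', b))
      = if (x, a) = (x', a') then 1 else 0)
    (W : Matrix (Fin nI × Fin nO × Fin nB) (Fin nI × Fin nO × Fin nB) ℂ)
    (hW : W = Matrix.of fun p q : Fin nI × Fin nO × Fin nB =>
      ∑ x : Fin na, ∑ y : Fin na,
        ρ (p.1, y) (q.1, x) * D (y, p.2.1, p.2.2) (x, q.2.1, q.2.2)) :
    ∃ (m : ℕ) (w : Fin m → ℝ) (ρs : Fin m → Matrix (Fin nI) (Fin nI) ℂ)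
      (Ds : Fin m → Matrix (Fin nO × Fin nB) (Fin nO × Fin nB) ℂ),
      (∀ k, 0 ≤ w k) ∧ (∑ k, w k) = 1 ∧
      (∀ k, (ρs k).PosSemidef) ∧ (∀ k, (ρs k).trace = 1) ∧
      (∀ k, (Ds k).PosSemidef) ∧
      (∀ k a a', (∑ b : Fin nB, Ds k (a, b) (a', b)) = if a = a' then 1 else 0) ∧
      (Matrix.of fun p q : Fin nI × Fin nO × Fin nB =>
          Λ (Matrix.of fun i j => W (i, p.2) (j, q.2)) p.1 q.1)
        = ∑ k, (w k : ℂ) • Matrix.of fun p q : Fin nI × Fin nO × Fin nB =>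
            ρs k p.1 q.1 * Ds k p.2 q.2 := by
  classical
  -- nonemptiness facts
  have hnI : nI ≠ 0 := by
    rintro rfl
    simp [Matrix.trace] at hρtr
  have hna : na ≠ 0 := by
    rintro rfl
    simp [Matrix.trace] at hρtr
  obtain ⟨m, A, B, hA, hB, hEq⟩ := hEB na ρ hρ hρtr
  set E : Fin m → Matrix (Fin nO × Fin nB) (Fin nO × Fin nB) ℂ :=
    fun k => Matrix.of fun s t : Fin nO × Fin nB =>
      ∑ x : Fin na, ∑ y : Fin na, B k y x * D (y, s) (x, t) with hEdef
  have hE : ∀ k, (E k).PosSemidef := fun k => aux13_contract_psd (hB k) hD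
  have htA : ∀ k, 0 ≤ (A k).trace := fun k => aux13_psd_trace_nonneg (hA k)
  have htB : ∀ k, 0 ≤ (B k).trace := fun k => aux13_psd_trace_nonneg (hB k)
  -- partial trace of E
  have hEtr : ∀ k (a a' : Fin nO),
      (∑ b : Fin nB, E k (a, b) (a', b)) = if a = a' then (B k).trace else 0 := by
    intro k a a'
    show (∑ b : Fin nB, ∑ x : Fin na, ∑ y : Fin na, B k y x * D (y, a, b) (x, a', b)) = _
    rw [Finset.sum_comm]
    conv_lhs => enter [2, x]; rw [Finset.sum_comm]
    simp only [← Finset.mul_sum, hDtr]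
    by_cases h : a = a'
    · subst h
      simp [Prod.ext_iff, mul_ite, Finset.sum_ite_eq', Matrix.trace, Matrix.diag]
    · simp [Prod.ext_iff, h]
  -- total weight
  have hsum : ∑ k, (A k).trace * (B k).trace = 1 := by
    have h1 := congrArg Matrix.trace hEq
    rw [Matrix.trace_sum] at h1
    have hL : (Matrix.of fun p q : Fin nI × Fin na =>
        Λ (Matrix.of fun i j => ρ (i, p.2) (j, q.2)) p.1 q.1).trace = 1 := by
      have : (Matrix.of fun p q : Fin nI × Fin na =>
          Λ (Matrix.of fun i j => ρ (i, p.2) (j, q.2)) p.1 q.1).trace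
          = ∑ y : Fin na, (Λ (Matrix.of fun i j => ρ (i, y) (j, y))).trace := by
        simp only [Matrix.trace, Matrix.diag, of_apply, Fintype.sum_prod_type]
        rw [Finset.sum_comm]
      rw [this]
      simp only [hTP]
      have : ∑ y : Fin na, (Matrix.of fun i j => ρ (i, y) (j, y) : Matrix (Fin nI) (Fin nI) ℂ).trace
          = ρ.trace := by
        simp only [Matrix.trace, Matrix.diag, of_apply, Fintype.sum_prod_type]
        rw [Finset.sum_comm]
      rw [this, hρtr]
    rw [hL] at h1
    refine Eq.trans (Finset.sum_congr rfl fun k _ => ?_) h1.symm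
    simp only [Matrix.trace, Matrix.diag, of_apply, Fintype.sum_prod_type]
    rw [Finset.sum_mul_sum]
  have hwC : ∀ k, ((((A k).trace * (B k).trace).re : ℝ) : ℂ) = (A k).trace * (B k).trace :=
    fun k => aux13_nonneg_re (mul_nonneg (htA k) (htB k))
  set ρs : Fin m → Matrix (Fin nI) (Fin nI) ℂ :=
    fun k => if (A k).trace = 0 then ((nI : ℂ))⁻¹ • 1 else ((A k).trace)⁻¹ • A k with hρsdef
  set Ds : Fin m → Matrix (Fin nO × Fin nB) (Fin nO × Fin nB) ℂ :=
    fun k => if (B k).trace = 0 then ((nB : ℂ))⁻¹ • 1 else ((B k).trace)⁻¹ • E k with hDsdef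
  have hnIc : (0:ℂ) ≤ (nI : ℂ) := by
    rw [← Complex.ofReal_natCast]; exact Complex.zero_le_real.mpr (by positivity)
  have hnBc : (0:ℂ) ≤ (nB : ℂ) := by
    rw [← Complex.ofReal_natCast]; exact Complex.zero_le_real.mpr (by positivity)
  refine ⟨m, fun k => ((A k).trace * (B k).trace).re, ρs, Ds, ?_, ?_, ?_, ?_, ?_, ?_, ?_⟩
  · intro k
    exact (Complex.nonneg_iff.mp (mul_nonneg (htA k) (htB k))).1
  · have : (((∑ k, ((A k).trace * (B k).trace).re : ℝ)) : ℂ) = 1 := by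
      push_cast
      simp only [hwC]
      exact hsum
    exact_mod_cast this
  · intro k
    rw [hρsdef]
    dsimp only
    split_ifs with h
    · exact aux13_psd_smul (Matrix.PosSemidef.one) (aux13_inv_nonneg hnIc)
    · exact aux13_psd_smul (hA k) (aux13_inv_nonneg (htA k))
  · intro k
    rw [hρsdef]
    dsimp only
    split_ifs with h
    · rw [Matrix.trace_smul, Matrix.trace_one]
      simp only [Fintype.card_fin, smul_eq_mul]
      rw [inv_mul_cancel₀ (Nat.cast_ne_zero.mpr hnI)]
    · rw [Matrix.trace_smul, smul_eq_mul, inv_mul_cancel₀ h]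
  · intro k
    rw [hDsdef]
    dsimp only
    split_ifs with h
    · exact aux13_psd_smul (Matrix.PosSemidef.one) (aux13_inv_nonneg hnBc)
    · exact aux13_psd_smul (hE k) (aux13_inv_nonneg (htB k))
  · intro k a a'
    have hnB : nB ≠ 0 := by
      rintro rfl
      have := hDtr ⟨0, Nat.pos_of_ne_zero hna⟩ a ⟨0, Nat.pos_of_ne_zero hna⟩ a
      simp at this
    by_cases h : (B k).trace = 0
    · have hd : Ds k = ((nB : ℂ))⁻¹ • 1 := by rw [hDsdef]; simp [h]
      rw [hd]
      have hone : ∀ b : Fin nB,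
          (((nB : ℂ))⁻¹ • (1 : Matrix (Fin nO × Fin nB) (Fin nO × Fin nB) ℂ)) (a, b) (a', b)
            = (nB : ℂ)⁻¹ * (if a = a' then 1 else 0) := by
        intro b
        by_cases haa : a = a' <;> simp [Matrix.one_apply, Prod.ext_iff, haa]
      simp only [hone, ← Finset.mul_sum]
      by_cases haa : a = a' <;>
        simp [haa, Finset.card_univ, mul_comm,
          mul_inv_cancel₀ (Nat.cast_ne_zero.mpr hnB : (nB:ℂ) ≠ 0)]
    · have hd : Ds k = ((B k).trace)⁻¹ • E k := by rw [hDsdef]; simp [h]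
      rw [hd]
      simp only [Matrix.smul_apply, smul_eq_mul]
      rw [← Finset.mul_sum, hEtr]
      by_cases haa : a = a' <;> simp [haa, inv_mul_cancel₀ h]
  · -- the main equality
    have hslice : ∀ (y x : Fin na) (i j : Fin nI),
        Λ (Matrix.of fun i' j' => ρ (i', y) (j', x)) i j = ∑ k, A k i j * B k y x := by
      intro y x i j
      have h2 := congrArg
        (fun M : Matrix (Fin nI × Fin na) (Fin nI × Fin na) ℂ => M (i, y) (j, x)) hEq
      simpa [Matrix.sum_apply] using h2
    have hW2 : ∀ (s t : Fin nO × Fin nB),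
        (Matrix.of fun i' j' : Fin nI => W (i', s) (j', t))
          = ∑ x : Fin na, ∑ y : Fin na,
              D (y, s) (x, t) • Matrix.of fun i' j' : Fin nI => ρ (i', y) (j', x) := by
      intro s t
      ext i' j'
      simp [hW, Matrix.sum_apply, mul_comm]
    have hlin : ∀ (s t : Fin nO × Fin nB) (i j : Fin nI),
        Λ (Matrix.of fun i' j' => W (i', s) (j', t)) i j
          = ∑ x : Fin na, ∑ y : Fin na,
              D (y, s) (x, t) * Λ (Matrix.of fun i' j' => ρ (i', y) (j', x)) i j := by
      intro s t i j
      rw [hW2 s t, show Λ = ⇑(IsLinearMap.mk' Λ hLin) from rfl]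
      simp only [map_sum, _root_.map_smul, Matrix.sum_apply, Matrix.smul_apply, smul_eq_mul,
        IsLinearMap.mk'_apply]
    ext p q
    obtain ⟨i, s⟩ := p
    obtain ⟨j, t⟩ := q
    simp only [of_apply, Matrix.sum_apply, Matrix.smul_apply, smul_eq_mul]
    rw [hlin s t i j]
    simp only [hslice]
    have hk : ∀ k : Fin m,
        ((((A k).trace * (B k).trace).re : ℝ) : ℂ) * (ρs k i j * Ds k s t)
          = A k i j * E k s t := by
      intro k
      rw [hwC k]
      by_cases hA0 : (A k).trace = 0
      · have hz : A k = 0 := aux13_psd_trace_zero (hA k) hA0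
        simp [hA0, hz]
      by_cases hB0 : (B k).trace = 0
      · have hz : B k = 0 := aux13_psd_trace_zero (hB k) hB0
        have hEz : E k s t = 0 := by simp [hEdef, hz]
        simp [hB0, hEz]
      · have h1 : ρs k i j = ((A k).trace)⁻¹ * A k i j := by rw [hρsdef]; simp [hA0]
        have h2 : Ds k s t = ((B k).trace)⁻¹ * E k s t := by rw [hDsdef]; simp [hB0]
        rw [h1, h2]
        field_simp
    simp only [hk, hEdef, of_apply]
    simp only [Finset.mul_sum]
    conv_lhs => enter [2, x]; rw [Finset.sum_comm]
    conv_lhs => rw [Finset.sum_comm]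
    refine Finset.sum_congr rfl fun k _ => Finset.sum_congr rfl fun x _ =>
      Finset.sum_congr rfl fun y _ => by ring
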